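/- arXiv:2501.07325 — 2 statements merged into one kernel-verified Lean document; each statement's English description precedes it below -/
import Mathlib

section
/- Let φ : (-∞,T] → ℝ^d be continuous, let −∞ < t₀ < t ≤ T, and suppose the segment φ_{t₀} ∈ C_r. Then for any 0 < λ ≤ 2r, ‖φ_t‖_r² ≤ e^{−2r(t−t₀)} ‖φ_{t₀}‖_r² + e^{−λt} · sup_{t₀ ≤ s ≤ t} e^{λs}|φ(s)|². -/
open Filter MeasureTheory Real

noncomputable def crNorm {d : ℕ} (r : ℝ) (f : ℝ → EuclideanSpace ℝ (Fin d)) : ℝ :=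
  ⨆ τ : Set.Iic (0 : ℝ), Real.exp (r * τ) * ‖f τ‖

def memCr {d : ℕ} (r : ℝ) (f : ℝ → EuclideanSpace ℝ (Fin d)) : Prop :=
  ContinuousOn f (Set.Iic 0) ∧
    ∃ L : EuclideanSpace ℝ (Fin d),
      Tendsto (fun τ : ℝ => Real.exp (r * τ) • f τ) atBot (nhds L)

private lemma aux_bdd {g : ℝ → ℝ} (hg : ContinuousOn g (Set.Iic 0)) {L : ℝ}
    (hL : Tendsto g atBot (nhds L)) :
    BddAbove (Set.range fun τ : Set.Iic (0:ℝ) => g τ) := by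
  have h1 : ∀ᶠ τ in atBot, g τ ≤ L + 1 :=
    hL.eventually (eventually_le_nhds (lt_add_one L))
  obtain ⟨M, hM⟩ := eventually_atBot.mp h1
  have hsub : Set.Icc (min M 0) 0 ⊆ Set.Iic 0 := fun x hx => hx.2
  obtain ⟨C, hC⟩ := isCompact_Icc.bddAbove_image (hg.mono hsub)
  refine ⟨max (L + 1) C, ?_⟩
  rintro x ⟨⟨τ, hτ⟩, rfl⟩
  by_cases h : τ ≤ M
  · exact le_max_of_le_left (hM τ h)
  · refine le_max_of_le_right (hC ⟨τ, ⟨?_, hτ⟩, rfl⟩)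
    exact le_trans (min_le_left M 0) (le_of_lt (not_le.mp h))

theorem stmt3 (d : ℕ) (r : ℝ) (hr : 0 < r) (T t₀ t : ℝ)
    (φ : ℝ → EuclideanSpace ℝ (Fin d)) (hcont : ContinuousOn φ (Set.Iic T))
    (ht₀ : t₀ < t) (htT : t ≤ T)
    (h0 : memCr r (fun τ => φ (t₀ + τ)))
    (lam : ℝ) (hlam0 : 0 < lam) (hlam : lam ≤ 2 * r) :
    (crNorm r (fun τ => φ (t + τ))) ^ 2 ≤
      Real.exp (-(2 * r * (t - t₀))) * (crNorm r (fun τ => φ (t₀ + τ))) ^ 2 +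
        Real.exp (-(lam * t)) *
          ⨆ s : Set.Icc t₀ t, Real.exp (lam * s) * ‖φ s‖ ^ 2 := by
  set N₀ := crNorm r (fun τ => φ (t₀ + τ)) with hN₀def
  set S := ⨆ s : Set.Icc t₀ t, Real.exp (lam * s) * ‖φ s‖ ^ 2 with hSdef
  set A := Real.exp (-(2 * r * (t - t₀))) * N₀ ^ 2 with hAdef
  set B := Real.exp (-(lam * t)) * S with hBdef
  -- continuity / tendsto facts for the t₀-segment
  have hg₀cont : ContinuousOn (fun τ => Real.exp (r * τ) * ‖φ (t₀ + τ)‖) (Set.Iic 0) :=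
    ((Real.continuous_exp.comp (continuous_const.mul continuous_id)).continuousOn).mul
      h0.1.norm
  obtain ⟨L, hL⟩ := h0.2
  have hg₀tend : Tendsto (fun τ => Real.exp (r * τ) * ‖φ (t₀ + τ)‖) atBot (nhds ‖L‖) := by
    have := hL.norm
    simpa [norm_smul, abs_of_pos (Real.exp_pos _)] using this
  have hbdd₀ : BddAbove (Set.range fun τ : Set.Iic (0:ℝ) =>
      Real.exp (r * τ) * ‖φ (t₀ + τ)‖) := aux_bdd hg₀cont hg₀tend
  -- S is bounded above and nonneg
  have hIccsub : Set.Icc t₀ t ⊆ Set.Iic T := fun x hx => le_trans hx.2 htT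
  have hScont : ContinuousOn (fun s => Real.exp (lam * s) * ‖φ s‖ ^ 2) (Set.Icc t₀ t) :=
    ((Real.continuous_exp.comp (continuous_const.mul continuous_id)).continuousOn).mul
      ((hcont.mono hIccsub).norm.pow 2)
  have hbddS : BddAbove (Set.range fun s : Set.Icc t₀ t =>
      Real.exp (lam * s) * ‖φ s‖ ^ 2) := by
    obtain ⟨C, hC⟩ := isCompact_Icc.bddAbove_image hScont
    exact ⟨C, by rintro x ⟨⟨s, hs⟩, rfl⟩; exact hC ⟨s, hs, rfl⟩⟩
  have hSnn : 0 ≤ S :=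
    Real.iSup_nonneg fun s => mul_nonneg (Real.exp_pos _).le (by positivity)
  have hN₀nn : 0 ≤ N₀ :=
    Real.iSup_nonneg fun τ => mul_nonneg (Real.exp_pos _).le (norm_nonneg _)
  have hAnn : 0 ≤ A := mul_nonneg (Real.exp_pos _).le (by positivity)
  have hBnn : 0 ≤ B := mul_nonneg (Real.exp_pos _).le hSnn
  -- the key pointwise bound
  have key : ∀ τ : Set.Iic (0:ℝ),
      (Real.exp (r * τ) * ‖φ (t + τ)‖) ^ 2 ≤ A + B := by
    rintro ⟨τ, hτ⟩
    simp only [Set.mem_Iic] at hτ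
    by_cases hcase : τ ≤ t₀ - t
    · -- far past: use N₀
      set σ := τ + (t - t₀) with hσdef
      have hσ0 : σ ≤ 0 := by simp only [hσdef]; linarith
      have hth : Real.exp (r * σ) * ‖φ (t₀ + σ)‖ ≤ N₀ :=
        le_ciSup hbdd₀ (⟨σ, hσ0⟩ : Set.Iic (0:ℝ))
      have heq : Real.exp (r * τ) * ‖φ (t + τ)‖ =
          Real.exp (-(r * (t - t₀))) * (Real.exp (r * σ) * ‖φ (t₀ + σ)‖) := by
        have h1 : t₀ + σ = t + τ := by simp [hσdef]; ring
        rw [h1, ← mul_assoc, ← Real.exp_add, hσdef]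
        ring_nf
      have hle : Real.exp (r * τ) * ‖φ (t + τ)‖ ≤ Real.exp (-(r * (t - t₀))) * N₀ := by
        rw [heq]
        exact mul_le_mul_of_nonneg_left hth (Real.exp_pos _).le
      have hnn : 0 ≤ Real.exp (r * τ) * ‖φ (t + τ)‖ :=
        mul_nonneg (Real.exp_pos _).le (norm_nonneg _)
      have hsq : (Real.exp (r * τ) * ‖φ (t + τ)‖) ^ 2 ≤
          (Real.exp (-(r * (t - t₀))) * N₀) ^ 2 := by
        exact pow_le_pow_left₀ hnn hle 2
      have hA : (Real.exp (-(r * (t - t₀))) * N₀) ^ 2 = A := by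
        rw [mul_pow, ← Real.exp_nat_mul, hAdef]
        push_cast
        ring_nf
      linarith [hsq, hA ▸ hsq]
    · -- recent past: use S
      push_neg at hcase
      have hmem : t + τ ∈ Set.Icc t₀ t := ⟨by linarith, by linarith⟩
      have hth : Real.exp (lam * (t + τ)) * ‖φ (t + τ)‖ ^ 2 ≤ S :=
        le_ciSup hbddS (⟨t + τ, hmem⟩ : Set.Icc t₀ t)
      have hexp : Real.exp (2 * (r * τ)) ≤ Real.exp (lam * τ) := by
        apply Real.exp_le_exp.mpr
        nlinarith
      calc (Real.exp (r * τ) * ‖φ (t + τ)‖) ^ 2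
          = Real.exp (2 * (r * τ)) * ‖φ (t + τ)‖ ^ 2 := by
            rw [mul_pow, ← Real.exp_nat_mul]; norm_num
        _ ≤ Real.exp (lam * τ) * ‖φ (t + τ)‖ ^ 2 :=
            mul_le_mul_of_nonneg_right hexp (by positivity)
        _ = Real.exp (-(lam * t)) * (Real.exp (lam * (t + τ)) * ‖φ (t + τ)‖ ^ 2) := by
            rw [← mul_assoc, ← Real.exp_add]; ring_nf
        _ ≤ B := mul_le_mul_of_nonneg_left hth (Real.exp_pos _).le
        _ ≤ A + B := le_add_of_nonneg_left hAnn
  -- conclude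
  have hNle : crNorm r (fun τ => φ (t + τ)) ≤ Real.sqrt (A + B) := by
    apply ciSup_le
    intro τ
    have hnn : 0 ≤ Real.exp (r * τ) * ‖φ (t + τ)‖ :=
      mul_nonneg (Real.exp_pos _).le (norm_nonneg _)
    calc Real.exp (r * τ) * ‖φ (t + τ)‖
        = Real.sqrt ((Real.exp (r * τ) * ‖φ (t + τ)‖) ^ 2) := (Real.sqrt_sq hnn).symm
      _ ≤ Real.sqrt (A + B) := Real.sqrt_le_sqrt (key τ)
  have hNnn : 0 ≤ crNorm r (fun τ => φ (t + τ)) :=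
    Real.iSup_nonneg fun τ => mul_nonneg (Real.exp_pos _).le (norm_nonneg _)
  calc (crNorm r (fun τ => φ (t + τ))) ^ 2
      ≤ Real.sqrt (A + B) ^ 2 := pow_le_pow_left₀ hNnn hNle 2
    _ = A + B := Real.sq_sqrt (by linarith)
end

section
/- Let 0 < λ < 2r, let μ be a probability measure on (-∞,0] with μ^{(2r)} = ∫_{-∞}^0 e^{−2rτ}μ(dτ) < ∞, and let φ : (-∞,t] → ℝ^d (t ≥ 0) be continuous with segment φ_0 ∈ C_r. Then ∫_0^t ∫_{-∞}^0 e^{λs} |φ(s+τ)|² μ(dτ) ds ≤ (μ^{(2r)}/(2r−λ)) ‖φ_0‖_r² + μ^{(2r)} ∫_0^t e^{λs} |φ(s)|² ds. -/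
open Filter MeasureTheory Real

set_option maxHeartbeats 1000000 in
theorem stmt6 (d : ℕ) (r lam : ℝ) (hr : 0 < r) (hlam0 : 0 < lam) (hlam : lam < 2 * r)
    (μ : Measure ℝ) [IsProbabilityMeasure μ]
    (hsupp : μ (Set.Ioi 0) = 0)
    (hμ2r : Integrable (fun τ : ℝ => Real.exp (-(2 * r * τ))) μ)
    (t : ℝ) (ht : 0 ≤ t)
    (φ : ℝ → EuclideanSpace ℝ (Fin d)) (hcont : ContinuousOn φ (Set.Iic t))
    (h0 : memCr r φ) :
    ∫ s in (0 : ℝ)..t, ∫ τ, Real.exp (lam * s) * ‖φ (s + τ)‖ ^ 2 ∂μ ≤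
      ((∫ τ, Real.exp (-(2 * r * τ)) ∂μ) / (2 * r - lam)) * (crNorm r φ) ^ 2 +
        (∫ τ, Real.exp (-(2 * r * τ)) ∂μ) *
          ∫ s in (0 : ℝ)..t, Real.exp (lam * s) * ‖φ s‖ ^ 2 := by
  obtain ⟨hφ0cont, L, hL⟩ := h0
  set K := crNorm r φ with hKdef
  set M := ∫ τ, Real.exp (-(2 * r * τ)) ∂μ with hMdef
  have hM0 : 0 ≤ M := integral_nonneg fun τ => (Real.exp_pos _).le
  have hτae : ∀ᵐ τ ∂μ, τ ≤ 0 := by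
    rw [ae_iff]
    have hset : {τ : ℝ | ¬ τ ≤ 0} = Set.Ioi 0 := by ext τ; simp [not_le]
    rw [hset]; exact hsupp
  -- a globally continuous modification of φ
  set φ' : ℝ → EuclideanSpace ℝ (Fin d) := fun u => φ (min u t) with hφ'def
  have hφ'c : Continuous φ' :=
    hcont.comp_continuous (continuous_id.min continuous_const) fun u => min_le_right u t
  have hφ'eq : ∀ u ≤ t, φ' u = φ u := by
    intro u hu; rw [hφ'def]; simp [min_eq_left hu]
  -- the crNorm bound
  have hbdd : BddAbove (Set.range fun τ : Set.Iic (0:ℝ) => Real.exp (r * τ) * ‖φ τ‖) := by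
    have h1 : ∀ᶠ τ in atBot, ‖Real.exp (r * τ) • φ τ‖ ≤ ‖L‖ + 1 :=
      hL.norm.eventually (eventually_le_nhds (lt_add_one ‖L‖))
    obtain ⟨A, hA⟩ := eventually_atBot.1 h1
    have hgc : ContinuousOn (fun τ : ℝ => Real.exp (r * τ) • φ τ) (Set.Iic (0:ℝ)) :=
      ((Real.continuous_exp.comp (continuous_const.mul continuous_id)).continuousOn).smul hφ0cont
    obtain ⟨C, hC⟩ := isCompact_Icc.exists_bound_of_continuousOn
      (hgc.mono (Set.Icc_subset_Iic_self (a := min A 0)))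
    refine ⟨max C (‖L‖ + 1), ?_⟩
    rintro x ⟨⟨τ, hτ⟩, rfl⟩
    have hnorm : Real.exp (r * τ) * ‖φ τ‖ = ‖Real.exp (r * τ) • φ τ‖ := by
      rw [norm_smul, Real.norm_eq_abs, abs_of_pos (Real.exp_pos _)]
    simp only [Set.mem_Iic] at hτ
    rcases le_total τ (min A 0) with h | h
    · exact hnorm.le.trans (le_max_of_le_right (hA τ (h.trans (min_le_left _ _))))
    · exact hnorm.le.trans (le_max_of_le_left (hC τ ⟨h, hτ⟩))
  have hKb : ∀ u ≤ (0:ℝ), Real.exp (r * u) * ‖φ u‖ ≤ K := fun u hu =>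
    le_ciSup hbdd (⟨u, hu⟩ : Set.Iic (0:ℝ))
  have hK0 : 0 ≤ K := le_trans (by positivity) (hKb 0 le_rfl)
  have hKsq : ∀ u ≤ (0:ℝ), ‖φ u‖ ^ 2 ≤ Real.exp (-(2 * r * u)) * K ^ 2 := by
    intro u hu
    have h2 := hKb u hu
    have h4 : (Real.exp (r * u) * ‖φ u‖) ^ 2 ≤ K ^ 2 :=
      pow_le_pow_left₀ (by positivity) h2 2
    have e1 : Real.exp (r * u) ^ 2 = Real.exp (2 * r * u) := by
      rw [sq, ← Real.exp_add]; ring_nf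
    have h5 : Real.exp (2 * r * u) * ‖φ u‖ ^ 2 ≤ K ^ 2 := by
      rw [mul_pow, e1] at h4; exact h4
    have e2 : Real.exp (-(2 * r * u)) * Real.exp (2 * r * u) = 1 := by
      rw [← Real.exp_add]; simp
    nlinarith [h5, (Real.exp_pos (-(2 * r * u))).le,
      mul_le_mul_of_nonneg_left h5 (Real.exp_pos (-(2 * r * u))).le]
  -- the cutoff function h
  set f : ℝ → ℝ := fun u => Real.exp (lam * u) * ‖φ' u‖ ^ 2 with hfdef
  have hfc : Continuous f :=
    (Real.continuous_exp.comp (continuous_const.mul continuous_id)).mul (hφ'c.norm.pow 2)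
  set hh : ℝ → ℝ := (Set.Icc (0:ℝ) t).indicator f with hhdef
  have hhmeas : Measurable hh := hfc.measurable.indicator measurableSet_Icc
  have hh0 : ∀ u, 0 ≤ hh u := fun u => Set.indicator_nonneg (fun v _ => by positivity) u
  obtain ⟨C, hC0, hC⟩ : ∃ C, 0 ≤ C ∧ ∀ u, hh u ≤ C := by
    obtain ⟨C0, hC0⟩ := isCompact_Icc.exists_bound_of_continuousOn
      (s := Set.Icc (0:ℝ) t) hfc.continuousOn
    refine ⟨max C0 0, le_max_right _ _, fun u => ?_⟩
    by_cases hu : u ∈ Set.Icc (0:ℝ) t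
    · rw [hhdef, Set.indicator_of_mem hu]
      exact le_trans (le_abs_self _) (le_max_of_le_left
        (by simpa [Real.norm_eq_abs] using hC0 u hu))
    · rw [hhdef, Set.indicator_of_notMem hu]; exact le_max_right _ _
  have hhint : Integrable hh := by
    rw [hhdef, integrable_indicator_iff measurableSet_Icc]
    exact hfc.integrableOn_Icc
  set Ch := ∫ u, hh u with hChdef
  have hCh0 : 0 ≤ Ch := integral_nonneg hh0
  have hCheq : Ch = ∫ s in (0:ℝ)..t, Real.exp (lam * s) * ‖φ s‖ ^ 2 := by
    rw [hChdef, hhdef, integral_indicator measurableSet_Icc, integral_Icc_eq_integral_Ioc,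
      intervalIntegral.integral_of_le ht]
    apply setIntegral_congr_fun measurableSet_Ioc
    intro u hu
    rw [hfdef]
    simp only []
    rw [hφ'eq u hu.2]
  -- key pointwise estimate
  have key : ∀ s ∈ Set.Icc (0:ℝ) t, ∀ τ ≤ (0:ℝ),
      Real.exp (lam * s) * ‖φ (s + τ)‖ ^ 2 ≤
        Real.exp (-(2 * r * τ)) * (Real.exp ((lam - 2 * r) * s) * K ^ 2 + hh (s + τ)) := by
    intro s hs τ hτ
    have hhnn := hh0 (s + τ)
    rcases le_or_gt (s + τ) 0 with hst | hst
    · have h1 := hKsq (s + τ) hst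
      have e1 : Real.exp (lam * s) * (Real.exp (-(2 * r * (s + τ))) * K ^ 2)
          = Real.exp (-(2 * r * τ)) * (Real.exp ((lam - 2 * r) * s) * K ^ 2) := by
        rw [← mul_assoc, ← mul_assoc, ← Real.exp_add, ← Real.exp_add]; ring_nf
      have h2 : Real.exp (lam * s) * ‖φ (s + τ)‖ ^ 2 ≤
          Real.exp (-(2 * r * τ)) * (Real.exp ((lam - 2 * r) * s) * K ^ 2) := by
        rw [← e1]; exact mul_le_mul_of_nonneg_left h1 (Real.exp_pos _).le
      nlinarith [Real.exp_pos (-(2 * r * τ))]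
    · have hmem : s + τ ∈ Set.Icc (0:ℝ) t := ⟨hst.le, by
        have := hs.2; linarith⟩
      have hheq : hh (s + τ) = Real.exp (lam * (s + τ)) * ‖φ (s + τ)‖ ^ 2 := by
        rw [hhdef, Set.indicator_of_mem hmem, hfdef]
        simp only []
        rw [hφ'eq _ hmem.2]
      have hexp : Real.exp (lam * s) ≤ Real.exp (-(2 * r * τ)) * Real.exp (lam * (s + τ)) := by
        rw [← Real.exp_add]
        apply Real.exp_le_exp.2
        nlinarith [mul_nonneg (neg_nonneg.2 hτ) (by linarith : (0:ℝ) ≤ 2 * r - lam)]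
      have h3 : Real.exp (lam * s) * ‖φ (s + τ)‖ ^ 2 ≤
          Real.exp (-(2 * r * τ)) * (Real.exp (lam * (s + τ)) * ‖φ (s + τ)‖ ^ 2) := by
        rw [← mul_assoc]
        exact mul_le_mul_of_nonneg_right hexp (by positivity)
      rw [← hheq] at h3
      nlinarith [Real.exp_pos (-(2 * r * τ)),
        mul_nonneg (Real.exp_pos ((lam - 2 * r) * s)).le (sq_nonneg K)]
  -- integrability facts
  have hexpmeas : Measurable fun τ : ℝ => Real.exp (-(2 * r * τ)) :=
    (Real.continuous_exp.comp ((continuous_const.mul continuous_id).neg)).measurable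
  have hbmeas : ∀ s : ℝ, AEStronglyMeasurable (fun τ => Real.exp (-(2 * r * τ)) * hh (s + τ)) μ :=
    fun s => ((hexpmeas.mul (hhmeas.comp (measurable_id.const_add s)))).aestronglyMeasurable
  have hInt_b : ∀ s : ℝ, Integrable (fun τ => Real.exp (-(2 * r * τ)) * hh (s + τ)) μ := by
    intro s
    apply Integrable.mono' (hμ2r.mul_const C) (hbmeas s)
    filter_upwards with τ
    rw [Real.norm_eq_abs, abs_of_nonneg (mul_nonneg (Real.exp_pos _).le (hh0 _))]
    exact mul_le_mul_of_nonneg_left (hC _) (Real.exp_pos _).le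
  have hInt_a : ∀ s : ℝ,
      Integrable (fun τ => Real.exp (-(2 * r * τ)) * (Real.exp ((lam - 2 * r) * s) * K ^ 2)) μ :=
    fun s => hμ2r.mul_const _
  set P : ℝ → ℝ := fun s => ∫ τ, Real.exp (-(2 * r * τ)) * hh (s + τ) ∂μ with hPdef
  have hP0 : ∀ s, 0 ≤ P s := fun s =>
    integral_nonneg fun τ => mul_nonneg (Real.exp_pos _).le (hh0 _)
  have hPle : ∀ s, P s ≤ C * M := by
    intro s
    calc P s ≤ ∫ τ, Real.exp (-(2 * r * τ)) * C ∂μ :=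
          integral_mono (hInt_b s) (hμ2r.mul_const C)
            fun τ => mul_le_mul_of_nonneg_left (hC _) (Real.exp_pos _).le
      _ = M * C := by rw [integral_mul_const, ← hMdef]
      _ = C * M := mul_comm _ _
  -- the pointwise-in-s inner bound
  have hinner : ∀ s ∈ Set.Icc (0:ℝ) t,
      (∫ τ, Real.exp (lam * s) * ‖φ (s + τ)‖ ^ 2 ∂μ) ≤
        M * (Real.exp ((lam - 2 * r) * s) * K ^ 2) + P s := by
    intro s hs
    have hgi : Integrable
        (fun τ => Real.exp (-(2 * r * τ)) * (Real.exp ((lam - 2 * r) * s) * K ^ 2 + hh (s + τ))) μ := by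
      have h' := (hInt_a s).add (hInt_b s)
      simp only [mul_add]; exact h'
    have hle : (∫ τ, Real.exp (lam * s) * ‖φ (s + τ)‖ ^ 2 ∂μ) ≤
        ∫ τ, Real.exp (-(2 * r * τ)) * (Real.exp ((lam - 2 * r) * s) * K ^ 2 + hh (s + τ)) ∂μ := by
      apply integral_mono_of_nonneg ?_ hgi
      · filter_upwards [hτae] with τ hτ using key s hs τ hτ
      · filter_upwards with τ; positivity
    refine hle.trans (le_of_eq ?_)
    simp only [mul_add]
    rw [integral_add (hInt_a s) (hInt_b s), integral_mul_const, ← hMdef, hPdef]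
  -- measurability and integrability of P
  have hqmeas : Measurable fun p : ℝ × ℝ => Real.exp (-(2 * r * p.2)) * hh (p.1 + p.2) :=
    (hexpmeas.comp measurable_snd).mul (hhmeas.comp (measurable_fst.add measurable_snd))
  have hPsm : StronglyMeasurable P := by
    rw [hPdef]
    exact hqmeas.stronglyMeasurable.integral_prod_right'
  have hPint : IntegrableOn P (Set.Ioc 0 t) := by
    apply Integrable.mono' (integrableOn_const (C := C * M) measure_Ioc_lt_top.ne)
      hPsm.aestronglyMeasurable.restrict
    filter_upwards with s
    rw [Real.norm_eq_abs, abs_of_nonneg (hP0 s)]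
    exact hPle s
  -- Fubini
  have hq : Integrable (fun p : ℝ × ℝ => Real.exp (-(2 * r * p.2)) * hh (p.1 + p.2))
      ((volume.restrict (Set.Ioc (0:ℝ) t)).prod μ) := by
    rw [integrable_prod_iff hqmeas.aestronglyMeasurable]
    constructor
    · exact Eventually.of_forall fun s => hInt_b s
    · have heq : (fun s => ∫ τ, ‖Real.exp (-(2 * r * τ)) * hh (s + τ)‖ ∂μ) = P := by
        funext s
        rw [hPdef]
        apply integral_congr_ae
        filter_upwards with τ
        rw [Real.norm_eq_abs, abs_of_nonneg (mul_nonneg (Real.exp_pos _).le (hh0 _))]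
      rw [heq]; exact hPint
  have hswap : ∫ s in Set.Ioc (0:ℝ) t, P s =
      ∫ τ, (∫ s in Set.Ioc (0:ℝ) t, Real.exp (-(2 * r * τ)) * hh (s + τ)) ∂μ := by
    rw [hPdef]
    exact integral_integral_swap hq
  have htrans : ∀ τ : ℝ,
      (∫ s in Set.Ioc (0:ℝ) t, Real.exp (-(2 * r * τ)) * hh (s + τ)) ≤
        Real.exp (-(2 * r * τ)) * Ch := by
    intro τ
    rw [integral_const_mul]
    apply mul_le_mul_of_nonneg_left ?_ (Real.exp_pos _).le
    have hint : Integrable (fun s => hh (s + τ)) := hhint.comp_add_right τ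
    calc (∫ s in Set.Ioc (0:ℝ) t, hh (s + τ)) ≤ ∫ s, hh (s + τ) :=
        setIntegral_le_integral hint (Eventually.of_forall fun s => hh0 _)
      _ = Ch := by rw [hChdef]; exact integral_add_right_eq_self hh τ
  have hP2 : ∫ s in Set.Ioc (0:ℝ) t, P s ≤ M * Ch := by
    rw [hswap]
    calc (∫ τ, (∫ s in Set.Ioc (0:ℝ) t, Real.exp (-(2 * r * τ)) * hh (s + τ)) ∂μ)
        ≤ ∫ τ, Real.exp (-(2 * r * τ)) * Ch ∂μ := by
          apply integral_mono_of_nonneg ?_ (hμ2r.mul_const Ch)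
            (Eventually.of_forall htrans)
          filter_upwards with τ
          exact integral_nonneg fun s => mul_nonneg (Real.exp_pos _).le (hh0 _)
      _ = M * Ch := by rw [integral_mul_const, ← hMdef]
  -- the exponential integral
  have hI1 : ∫ s in Set.Ioc (0:ℝ) t, Real.exp ((lam - 2 * r) * s) ≤ 1 / (2 * r - lam) := by
    rw [← intervalIntegral.integral_of_le ht]
    have hc : lam - 2 * r ≠ 0 := by linarith
    rw [intervalIntegral.integral_comp_mul_left (fun x => Real.exp x) hc, integral_exp,
      smul_eq_mul]
    have h1 : Real.exp ((lam - 2 * r) * t) ≤ 1 := Real.exp_le_one_iff.2 (by nlinarith)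
    have h3 := (Real.exp_pos ((lam - 2 * r) * t)).le
    have heq : (lam - 2 * r)⁻¹ * (Real.exp ((lam - 2 * r) * t) - Real.exp ((lam - 2 * r) * 0)) =
        (1 - Real.exp ((lam - 2 * r) * t)) / (2 * r - lam) := by
      have hd : 0 < 2 * r - lam := by linarith
      rw [mul_zero, Real.exp_zero, show lam - 2 * r = -(2 * r - lam) by ring, inv_neg,
        div_eq_mul_inv]
      ring
    rw [heq]
    have hd : 0 < 2 * r - lam := by linarith
    rw [div_le_div_iff₀ hd hd]
    nlinarith
  -- assemble
  have hi1 : IntegrableOn (fun s => M * (Real.exp ((lam - 2 * r) * s) * K ^ 2))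
      (Set.Ioc (0:ℝ) t) := by
    apply Continuous.integrableOn_Ioc
    exact continuous_const.mul
      ((Real.continuous_exp.comp (continuous_const.mul continuous_id)).mul continuous_const)
  have hL2 : ∫ s in Set.Ioc (0:ℝ) t, (M * (Real.exp ((lam - 2 * r) * s) * K ^ 2) + P s) ≤
      M / (2 * r - lam) * K ^ 2 + M * Ch := by
    rw [integral_add hi1 hPint]
    have e1 : ∫ s in Set.Ioc (0:ℝ) t, M * (Real.exp ((lam - 2 * r) * s) * K ^ 2) =
        (M * K ^ 2) * ∫ s in Set.Ioc (0:ℝ) t, Real.exp ((lam - 2 * r) * s) := by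
      rw [← integral_const_mul]
      apply integral_congr_ae
      filter_upwards with s
      ring
    have h5 : (M * K ^ 2) * (∫ s in Set.Ioc (0:ℝ) t, Real.exp ((lam - 2 * r) * s)) ≤
        (M * K ^ 2) * (1 / (2 * r - lam)) :=
      mul_le_mul_of_nonneg_left hI1 (by positivity)
    have h6 : (M * K ^ 2) * (1 / (2 * r - lam)) = M / (2 * r - lam) * K ^ 2 := by
      field_simp
    rw [e1]
    linarith [hP2]
  rw [intervalIntegral.integral_of_le ht, ← hCheq]
  have hmono : (∫ s in Set.Ioc (0:ℝ) t, ∫ τ, Real.exp (lam * s) * ‖φ (s + τ)‖ ^ 2 ∂μ) ≤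
      ∫ s in Set.Ioc (0:ℝ) t, (M * (Real.exp ((lam - 2 * r) * s) * K ^ 2) + P s) := by
    apply integral_mono_of_nonneg ?_ (hi1.add hPint)
    · filter_upwards [ae_restrict_mem measurableSet_Ioc] with s hs
      exact hinner s ⟨hs.1.le, hs.2⟩
    · filter_upwards with s
      exact integral_nonneg fun τ => by positivity
  linarith [hmono, hL2]
end
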